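/- Let w_0 be a positive integer and m_0 ≥ 1. Starting from the pair of sequences α = (w_0, ..., w_0) (m_0 copies) and β = (1, w_0, ..., w_0) (a 1 followed by m_0 copies of w_0), apply the operations S, then T^{k_0}, then G^{l_0} (each two-argument operation applied to the last two sequences produced). The result consists of 2 + k_0 + l_0 entries equal to 1 followed by m_0 entries equal to (2 + k_0)·w_0. -/

import Mathlib

def opG (α : List ℕ) : List ℕ := 1 :: α

def opS (α β : List ℕ) : List ℕ := 1 :: 1 :: List.zipWith (· + ·) α β.tail

def opT (α β : List ℕ) : List ℕ :=
  1 :: 1 :: List.zipWith (fun a b => 2*b - a) α β.tail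

def stepG (p : List ℕ × List ℕ) : List ℕ × List ℕ := (p.2, opG p.2)
def stepS (p : List ℕ × List ℕ) : List ℕ × List ℕ := (p.2, opS p.1 p.2)
def stepT (p : List ℕ × List ℕ) : List ℕ × List ℕ := (p.2, opT p.1 p.2)

def B (m w j : ℕ) : List ℕ := List.replicate (j+1) 1 ++ List.replicate m ((j+1)*w)

lemma opT_B (m w j : ℕ) : opT (B m w j) (B m w (j+1)) = B m w (j+2) := by
  have htail : (B m w (j+1)).tail
      = List.replicate (j+1) 1 ++ List.replicate m ((j+2)*w) := by
    simp [B, List.replicate_succ]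
  unfold opT
  rw [htail]
  unfold B
  rw [List.zipWith_append (by simp), List.zipWith_replicate', List.zipWith_replicate']
  have key : 2*((j+2)*w) - (j+1)*w = (j+3)*w := by
    rw [show (2:ℕ)*((j+2)*w) = (2*(j+2))*w from by ring, ← Nat.sub_mul,
      show 2*(j+2)-(j+1) = j+3 from by omega]
  rw [key]
  simp [List.replicate_succ]

lemma stepT_iter (m w k j : ℕ) :
    stepT^[k] (B m w j, B m w (j+1)) = (B m w (j+k), B m w (j+k+1)) := by
  induction k generalizing j with
  | zero => simp
  | succ k ih =>
    rw [Function.iterate_succ_apply]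
    have : stepT (B m w j, B m w (j+1)) = (B m w (j+1), B m w (j+2)) := by
      simp [stepT, opT_B]
    rw [this, ih]
    congr 1 <;> congr 1 <;> omega

lemma stepG_iter (l : ℕ) (x y : List ℕ) :
    (stepG^[l] (x, y)).2 = List.replicate l 1 ++ y := by
  induction l generalizing x y with
  | zero => simp
  | succ l ih =>
    rw [Function.iterate_succ_apply, stepG]
    simp only [stepG, ih, opG]
    rw [List.replicate_succ', List.append_assoc]
    rfl

/-- Starting from `α = (w₀,…,w₀)` (`m₀` copies) and `β = (1,w₀,…,w₀)`, the
operations `S, T^{k₀}, G^{l₀}` produce `2+k₀+l₀` ones followed by `m₀` copies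
of `(2+k₀)·w₀`. -/
theorem corollary_n_one (w₀ m₀ k₀ l₀ : ℕ) (hw : 1 ≤ w₀) (hm : 1 ≤ m₀) :
    (stepG^[l₀] (stepT^[k₀] (stepS
        (List.replicate m₀ w₀, 1 :: List.replicate m₀ w₀)))).2
      = List.replicate (2+k₀+l₀) 1 ++ List.replicate m₀ ((2+k₀) * w₀) := by
  have hS : stepS (List.replicate m₀ w₀, 1 :: List.replicate m₀ w₀)
      = (B m₀ w₀ 0, B m₀ w₀ 1) := by
    simp [stepS, opS, B, List.replicate_succ, two_mul]
  rw [hS, stepT_iter]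
  simp only [Nat.zero_add]
  have := stepG_iter l₀ (B m₀ w₀ k₀) (B m₀ w₀ (k₀+1))
  rw [this]
  unfold B
  rw [← List.append_assoc, ← List.replicate_add]
  congr 2
  · omega
  · ring
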